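/- Let G be a group and (B^{p,q})_{p,q∈ℤ} a bicomplex of G-representations over ℝ: each B^{p,q} is a real vector space with a linear G-action that is semisimple as a module over the group algebra ℝ[G], and there are G-equivariant linear maps d_h : B^{p,q} → B^{p+1,q} and d_v : B^{p,q} → B^{p,q+1} with d_h∘d_h = 0, d_v∘d_v = 0, d_h∘d_v + d_v∘d_h = 0. Assume: (i) B^{p,q} = 0 unless 0 ≤ −p ≤ q; (ii) there exists P ≥ 0 with B^{p,q} = 0 whenever p < −P; (iii) for every (p,q) with p + q ≠ 0, ker(d_h : B^{p,q} → B^{p+1,q}) = im(d_h : B^{p−1,q} → B^{p,q}). For r ≥ 0 set Z_h^r := ker(d_h : B^{−r,r} → B^{−r+1,r}). Then there exists a G-equivariant linear map β : ⊕_{r≥0} Z_h^r → ⊕_{r≥0} B^{−r,r} such that for every r ≥ 0 and every z ∈ Z_h^r, writing c_p ∈ B^{−p,p} for the components of β(z), one has c_r = z, c_p = 0 for all p < r, and d_v(c_p) + d_h(c_{p+1}) = 0 in B^{−p,p+1} for every p ≥ 0 (i.e. β(z) = z + lower order terms in ⊕_{p>r} B^{−p,p} is a cocycle of total degree 0 in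 the total complex). -/

import Mathlib

/- Common setup for bicomplexes `B^{p,q}` of real vector spaces with horizontal
differential `d_h : B^{p,q} → B^{p+1,q}` and vertical differential
`d_v : B^{p,q} → B^{p,q+1}`.  `castB` transports along an equality of the first index. -/

/-- Transport an element of `B p q` along an equality `p = p'` of the first index. -/
def castB (B : ℤ → ℤ → Type*) {q p p' : ℤ} (x : B p q) (h : p = p') : B p' q := h ▸ x

section Cast
variable (B : ℤ → ℤ → Type*) [∀ p q, AddCommGroup (B p q)] [∀ p q, Module ℝ (B p q)]

/-- Linear-map version of transport along an equality of the first index. -/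
def castLM {q p p' : ℤ} (h : p = p') : B p q →ₗ[ℝ] B p' q :=
  match p', h with
  | _, rfl => LinearMap.id

lemma castLM_self {q p : ℤ} (h : p = p) (x : B p q) : castLM B h x = x := rfl

lemma castB_eq_castLM {q p p' : ℤ} (h : p = p') (x : B p q) :
    castB B x h = castLM B h x := by cases h; rfl

lemma castLM_castLM {q p p' p'' : ℤ} (h : p = p') (h' : p' = p'') (x : B p q) :
    castLM B h' (castLM B h x) = castLM B (h.trans h') x := by cases h; cases h'; rfl

/-- Transport along an equality of naturals, on the antidiagonal. -/
def castD {r p : ℕ} (h : r = p) : B (-(r : ℤ)) (r : ℤ) →ₗ[ℝ] B (-(p : ℤ)) (p : ℤ) :=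
  match p, h with
  | _, rfl => LinearMap.id

lemma castD_self {r : ℕ} (h : r = r) (x : B (-(r : ℤ)) (r : ℤ)) : castD B h x = x := rfl

variable {G : Type*} [Group G]

lemma dh_castLM (dh : ∀ p q, B p q →ₗ[ℝ] B (p + 1) q) {p p' q : ℤ} (h : p = p')
    (h' : p + 1 = p' + 1) (x : B p q) :
    dh p' q (castLM B h x) = castLM B h' (dh p q x) := by cases h; rfl

lemma dv_castLM (dv : ∀ p q, B p q →ₗ[ℝ] B p (q + 1)) {p p' q : ℤ} (h : p = p')
    (x : B p q) :
    dv p' q (castLM B h x) = castLM B h (dv p q x) := by cases h; rfl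

lemma rho_castLM (ρ : ∀ p q, Representation ℝ G (B p q)) {p p' q : ℤ} (h : p = p')
    (g : G) (x : B p q) :
    ρ p' q g (castLM B h x) = castLM B h (ρ p q g x) := by cases h; rfl

lemma rho_castD (ρ : ∀ p q, Representation ℝ G (B p q)) {r p : ℕ} (h : r = p)
    (g : G) (x : B (-(r : ℤ)) (r : ℤ)) :
    ρ (-(p : ℤ)) (p : ℤ) g (castD B h x) = castD B h (ρ (-(r : ℤ)) (r : ℤ) g x) := by
  cases h; rfl

/-- The recursively defined family of component maps. -/
noncomputable def chainAux
    (dvd : ∀ n : ℕ, B (-(n : ℤ)) (n : ℤ) →ₗ[ℝ] B (-(n : ℤ)) ((n : ℤ) + 1))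
    (σ : ∀ n : ℕ, B (-(n : ℤ)) ((n : ℤ) + 1) →ₗ[ℝ] B (-((n : ℤ) + 1)) ((n : ℤ) + 1))
    (π : ∀ n : ℕ, B (-(n : ℤ)) (n : ℤ) →ₗ[ℝ] B (-(n : ℤ)) (n : ℤ))
    (r : ℕ) : ∀ p : ℕ, B (-(r : ℤ)) (r : ℤ) →ₗ[ℝ] B (-(p : ℤ)) (p : ℤ) :=
  Nat.rec (if h : r = 0 then (castD B h).comp (π r) else 0)
    (fun p ih => if h : r = p + 1 then (castD B h).comp (π r)
      else (σ p).comp ((-(dvd p)).comp ih))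

variable (dvd : ∀ n : ℕ, B (-(n : ℤ)) (n : ℤ) →ₗ[ℝ] B (-(n : ℤ)) ((n : ℤ) + 1))
    (σ : ∀ n : ℕ, B (-(n : ℤ)) ((n : ℤ) + 1) →ₗ[ℝ] B (-((n : ℤ) + 1)) ((n : ℤ) + 1))
    (π : ∀ n : ℕ, B (-(n : ℤ)) (n : ℤ) →ₗ[ℝ] B (-(n : ℤ)) (n : ℤ))

lemma chainAux_zero (r : ℕ) :
    chainAux B dvd σ π r 0 = if h : r = 0 then (castD B h).comp (π r) else 0 := rfl

lemma chainAux_succ (r p : ℕ) :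
    chainAux B dvd σ π r (p + 1) = if h : r = p + 1 then (castD B h).comp (π r)
      else (σ p).comp ((-(dvd p)).comp (chainAux B dvd σ π r p)) := rfl

lemma chainAux_lt (r p : ℕ) (h : p < r) : chainAux B dvd σ π r p = 0 := by
  induction p with
  | zero => rw [chainAux_zero, dif_neg (by omega)]
  | succ p ih =>
      rw [chainAux_succ, dif_neg (by omega), ih (by omega)]
      simp

lemma chainAux_diag (r : ℕ) (z : B (-(r : ℤ)) (r : ℤ)) (hz : π r z = z) :
    chainAux B dvd σ π r r z = z := by
  cases r with
  | zero =>
      rw [chainAux_zero, dif_pos rfl, LinearMap.comp_apply, hz]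
      exact castD_self B _ _
  | succ p =>
      rw [chainAux_succ, dif_pos rfl, LinearMap.comp_apply, hz]
      exact castD_self B _ _
end Cast

section SS
variable {G : Type*} [Group G] {M N : Type*} [AddCommGroup M] [Module ℝ M]
  [AddCommGroup N] [Module ℝ N]

lemma exists_equiv_proj (ρ : Representation ℝ G M)
    (hss : ∀ W : Submodule ℝ M, (∀ g, ∀ x ∈ W, ρ g x ∈ W) →
      ∃ W' : Submodule ℝ M, (∀ g, ∀ x ∈ W', ρ g x ∈ W') ∧ IsCompl W W')
    (W : Submodule ℝ M) (hW : ∀ g, ∀ x ∈ W, ρ g x ∈ W) :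
    ∃ π : M →ₗ[ℝ] M, (∀ x, π x ∈ W) ∧ (∀ x ∈ W, π x = x) ∧
      (∀ g x, π (ρ g x) = ρ g (π x)) := by
  obtain ⟨W', hW', hc⟩ := hss W hW
  set P := W.subtype.comp (W.projectionOnto W' hc) with hP
  have hmem : ∀ x, P x ∈ W := fun x => (W.projectionOnto W' hc x).2
  have hid : ∀ x ∈ W, P x = x := by
    intro x hx
    have := Submodule.linearProjOfIsCompl_apply_left hc ⟨x, hx⟩
    simp only [hP, LinearMap.comp_apply, Submodule.subtype_apply]
    exact congrArg Subtype.val this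
  have hzero : ∀ x ∈ W', P x = 0 := by
    intro x hx
    have := Submodule.projectionOnto_apply_of_mem_right hc hx
    simp [hP, this]
  have hPP : ∀ x, P (P x) = P x := fun x => hid _ (hmem x)
  have hsub : ∀ x, x - P x ∈ W' := by
    intro x
    have h0 : P (x - P x) = 0 := by rw [map_sub, hPP, sub_self]
    have : W.projectionOnto W' hc (x - P x) = 0 := Subtype.ext (by simpa [hP] using h0)
    exact (Submodule.projectionOnto_apply_eq_zero_iff hc).1 this
  refine ⟨P, hmem, hid, ?_⟩
  intro g x
  have h1 : ρ g (P x) ∈ W := hW g _ (hmem x)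
  have h2 : ρ g x - ρ g (P x) ∈ W' := by
    have := hW' g _ (hsub x); rwa [map_sub] at this
  calc P (ρ g x) = P (ρ g (P x) + (ρ g x - ρ g (P x))) := by rw [add_sub_cancel]
    _ = P (ρ g (P x)) + P (ρ g x - ρ g (P x)) := map_add _ _ _
    _ = ρ g (P x) := by rw [hid _ h1, hzero _ h2, add_zero]

lemma exists_equiv_section (ρM : Representation ℝ G M) (ρN : Representation ℝ G N)
    (hssM : ∀ W : Submodule ℝ M, (∀ g, ∀ x ∈ W, ρM g x ∈ W) →
      ∃ W' : Submodule ℝ M, (∀ g, ∀ x ∈ W', ρM g x ∈ W') ∧ IsCompl W W')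
    (hssN : ∀ W : Submodule ℝ N, (∀ g, ∀ x ∈ W, ρN g x ∈ W) →
      ∃ W' : Submodule ℝ N, (∀ g, ∀ x ∈ W', ρN g x ∈ W') ∧ IsCompl W W')
    (f : M →ₗ[ℝ] N) (hf : ∀ g x, f (ρM g x) = ρN g (f x)) :
    ∃ s : N →ₗ[ℝ] M, (∀ g y, s (ρN g y) = ρM g (s y)) ∧
      ∀ y ∈ LinearMap.range f, f (s y) = y := by
  obtain ⟨W', hW', hc⟩ := hssM (LinearMap.ker f) (by
    intro g x hx
    simp only [LinearMap.mem_ker] at hx ⊢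
    rw [hf, hx, map_zero])
  obtain ⟨π, hπmem, hπid, hπequiv⟩ := exists_equiv_proj ρN hssN (LinearMap.range f) (by
    rintro g x ⟨y, rfl⟩
    exact ⟨ρM g y, hf g y⟩)
  set F := f.comp W'.subtype with hF
  have hFinj : Function.Injective F := by
    rw [← LinearMap.ker_eq_bot]
    ext x
    simp only [LinearMap.mem_ker, Submodule.mem_bot, hF, LinearMap.comp_apply,
      Submodule.subtype_apply]
    constructor
    · intro hx
      have : (x : M) ∈ LinearMap.ker f ⊓ W' := ⟨LinearMap.mem_ker.2 hx, x.2⟩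
      rw [hc.inf_eq_bot] at this
      exact Subtype.ext (by simpa using this)
    · rintro rfl; simp
  have hFr : LinearMap.range F = LinearMap.range f := by
    apply le_antisymm
    · rintro _ ⟨x, rfl⟩; exact ⟨x, rfl⟩
    · rintro _ ⟨x, rfl⟩
      have hx : x ∈ LinearMap.ker f ⊔ W' := by rw [hc.sup_eq_top]; trivial
      obtain ⟨k, hk, w, hw, rfl⟩ := Submodule.mem_sup.1 hx
      exact ⟨⟨w, hw⟩, by simp [hF, LinearMap.mem_ker.1 hk]⟩
  set e := LinearEquiv.ofInjective F hFinj with he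
  set π' := π.codRestrict (LinearMap.range F) (fun y => by rw [hFr]; exact hπmem y) with hπ'
  set s := W'.subtype.comp ((e.symm : LinearMap.range F →ₗ[ℝ] W').comp π') with hs
  have hfs : ∀ y, f (s y) = π y := by
    intro y
    simp only [hs, LinearMap.comp_apply, Submodule.subtype_apply, LinearEquiv.coe_coe]
    have h1 : f ((e.symm (π' y) : W') : M) = F (e.symm (π' y)) := rfl
    have h2 : F (e.symm (π' y)) = ((e (e.symm (π' y)) : LinearMap.range F) : N) :=
      (LinearEquiv.ofInjective_apply F (h := hFinj) _).symm
    rw [h1, h2, LinearEquiv.apply_symm_apply]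
    rfl
  have hsmem : ∀ y, s y ∈ W' := fun y => (e.symm (π' y)).2
  refine ⟨s, ?_, ?_⟩
  · intro g y
    have hinjW : ∀ a ∈ W', ∀ b ∈ W', f a = f b → a = b := by
      intro a ha b hb hab
      have := hFinj (a₁ := ⟨a, ha⟩) (a₂ := ⟨b, hb⟩) (by simpa [hF] using hab)
      simpa using congrArg Subtype.val this
    refine hinjW _ (hsmem _) _ (hW' g _ (hsmem y)) ?_
    rw [hfs, hπequiv, ← hfs, hf]
  · intro y hy
    rw [hfs, hπid y hy]

end SS


/-- for a bicomplex of semisimple `G`-representations concentrated in the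
sector `0 ≤ -p ≤ q`, bounded in the horizontal direction, and whose horizontal cohomology
is concentrated on the diagonal `p + q = 0`, there is a `G`-equivariant linear map `β`
sending each horizontal cocycle `z ∈ Z_h^r = ker(d_h : B^{-r,r} → B^{-r+1,r})` to a total
cocycle of total degree `0` of the form `β(z) = z + l.o.t.`. -/
theorem statement9 (G : Type*) [Group G] (B : ℤ → ℤ → Type*)
    [∀ p q, AddCommGroup (B p q)] [∀ p q, Module ℝ (B p q)]
    (ρ : ∀ p q, Representation ℝ G (B p q))
    -- semisimplicity: every `G`-invariant subspace has a `G`-invariant complement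
    (hss : ∀ p q (W : Submodule ℝ (B p q)), (∀ g, ∀ x ∈ W, ρ p q g x ∈ W) →
      ∃ W' : Submodule ℝ (B p q), (∀ g, ∀ x ∈ W', ρ p q g x ∈ W') ∧ IsCompl W W')
    (dh : ∀ p q, B p q →ₗ[ℝ] B (p + 1) q)
    (dv : ∀ p q, B p q →ₗ[ℝ] B p (q + 1))
    (hdh2 : ∀ p q x, dh (p + 1) q (dh p q x) = 0)
    (hdv2 : ∀ p q x, dv p (q + 1) (dv p q x) = 0)
    (hanti : ∀ p q x, dh p (q + 1) (dv p q x) + dv (p + 1) q (dh p q x) = 0)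
    (hdhG : ∀ p q g x, dh p q (ρ p q g x) = ρ (p + 1) q g (dh p q x))
    (hdvG : ∀ p q g x, dv p q (ρ p q g x) = ρ p (q + 1) g (dv p q x))
    -- (i): concentration in the sector 0 ≤ -p ≤ q
    (hsector : ∀ p q : ℤ, ¬(0 ≤ -p ∧ -p ≤ q) → ∀ x : B p q, x = 0)
    -- (ii): horizontal boundedness
    (hbound : ∃ P : ℤ, 0 ≤ P ∧ ∀ p q : ℤ, p < -P → ∀ x : B p q, x = 0)
    -- (iii): horizontal exactness off the diagonal p + q = 0
    (hexact : ∀ p q : ℤ, (p + 1) + q ≠ 0 → ∀ x : B (p + 1) q,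
      dh (p + 1) q x = 0 → ∃ y : B p q, dh p q y = x) :
    ∃ β : ∀ r : ℕ, B (-(r : ℤ)) (r : ℤ) →ₗ[ℝ] (∀ p : ℕ, B (-(p : ℤ)) (p : ℤ)),
      -- `β` is `G`-equivariant on the horizontal cocycles
      (∀ (r : ℕ) (g : G) (z : B (-(r : ℤ)) (r : ℤ)), dh (-(r : ℤ)) (r : ℤ) z = 0 →
        ∀ p : ℕ, β r (ρ (-(r : ℤ)) (r : ℤ) g z) p = ρ (-(p : ℤ)) (p : ℤ) g (β r z p))
      ∧ ∀ (r : ℕ) (z : B (-(r : ℤ)) (r : ℤ)), dh (-(r : ℤ)) (r : ℤ) z = 0 →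
          -- leading component `z` ...
          β r z r = z
          -- ... vanishing lower components ...
          ∧ (∀ p : ℕ, p < r → β r z p = 0)
          -- ... and `β r z` is a total cocycle of total degree 0
          ∧ ∀ p : ℕ,
              dv (-(p : ℤ)) (p : ℤ) (β r z p)
                + castB B (dh (-((p : ℤ) + 1)) ((p : ℤ) + 1) (β r z (p + 1)))
                    (by ring) = 0 := by
  clear hsector hbound hdh2
  -- equivariant projections onto the horizontal-cocycle subspaces on the diagonal
  have hπ : ∀ n : ℕ, ∃ π : B (-(n : ℤ)) (n : ℤ) →ₗ[ℝ] B (-(n : ℤ)) (n : ℤ),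
      (∀ x, dh (-(n : ℤ)) (n : ℤ) x = 0 → π x = x) ∧
      (∀ g x, π (ρ (-(n : ℤ)) (n : ℤ) g x) = ρ (-(n : ℤ)) (n : ℤ) g (π x)) := by
    intro n
    obtain ⟨π, _, hid, hequiv⟩ := exists_equiv_proj (ρ (-(n : ℤ)) (n : ℤ)) (hss _ _)
      (LinearMap.ker (dh (-(n : ℤ)) (n : ℤ))) (by
        intro g x hx
        simp only [LinearMap.mem_ker] at hx ⊢
        rw [hdhG, hx, map_zero])
    exact ⟨π, fun x hx => hid x (LinearMap.mem_ker.2 hx), hequiv⟩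
  choose π hπid hπequiv using hπ
  -- equivariant sections of the horizontal differential into the column p = -(n+1)
  have hσ : ∀ n : ℕ, ∃ s : B (-(n : ℤ)) ((n : ℤ) + 1) →ₗ[ℝ] B (-((n : ℤ) + 1)) ((n : ℤ) + 1),
      (∀ g y, s (ρ (-(n : ℤ)) ((n : ℤ) + 1) g y) = ρ (-((n : ℤ) + 1)) ((n : ℤ) + 1) g (s y)) ∧
      (∀ w : B (-(n : ℤ)) ((n : ℤ) + 1), dh (-(n : ℤ)) ((n : ℤ) + 1) w = 0 →
        castLM B (show -((n : ℤ) + 1) + 1 = -(n : ℤ) by ring)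
          (dh (-((n : ℤ) + 1)) ((n : ℤ) + 1) (s w)) = w) := by
    intro n
    set f : B (-((n : ℤ) + 1)) ((n : ℤ) + 1) →ₗ[ℝ] B (-(n : ℤ)) ((n : ℤ) + 1) :=
      (castLM B (show -((n : ℤ) + 1) + 1 = -(n : ℤ) by ring)).comp
        (dh (-((n : ℤ) + 1)) ((n : ℤ) + 1)) with hfdef
    obtain ⟨s, hsequiv, hssec⟩ := exists_equiv_section (ρ (-((n : ℤ) + 1)) ((n : ℤ) + 1))
      (ρ (-(n : ℤ)) ((n : ℤ) + 1)) (hss _ _) (hss _ _) f (by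
        intro g x
        simp only [hfdef, LinearMap.comp_apply]
        rw [hdhG, rho_castLM])
    refine ⟨s, hsequiv, ?_⟩
    intro w hw
    have hmem : w ∈ LinearMap.range f := by
      have h2 : -(n : ℤ) = -((n : ℤ) + 1) + 1 := by ring
      obtain ⟨y, hy⟩ := hexact (-((n : ℤ) + 1)) ((n : ℤ) + 1) (by omega)
        (castLM B h2 w) (by
          rw [dh_castLM B dh h2 (show -(n : ℤ) + 1 = (-((n : ℤ) + 1) + 1) + 1 by ring), hw,
            map_zero])
      refine ⟨y, ?_⟩
      simp only [hfdef, LinearMap.comp_apply]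
      rw [hy, castLM_castLM, castLM_self]
    simpa [hfdef] using hssec w hmem
  choose σ hσequiv hσsec using hσ
  -- the chain of component maps
  refine ⟨fun r => LinearMap.pi
    (fun p => chainAux B (fun k : ℕ => dv (-(k : ℤ)) (k : ℤ)) σ π r p), ?_, ?_⟩
  · -- equivariance
    intro r g z _hz p
    show chainAux B (fun k : ℕ => dv (-(k : ℤ)) (k : ℤ)) σ π r p (ρ (-(r : ℤ)) (r : ℤ) g z)
      = ρ (-(p : ℤ)) (p : ℤ) g (chainAux B (fun k : ℕ => dv (-(k : ℤ)) (k : ℤ)) σ π r p z)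
    induction p with
    | zero =>
        rw [chainAux_zero]
        by_cases h : r = 0
        · rw [dif_pos h]
          simp only [LinearMap.comp_apply]
          rw [hπequiv, rho_castD]
        · rw [dif_neg h, LinearMap.zero_apply, LinearMap.zero_apply, map_zero]
    | succ p ih =>
        rw [chainAux_succ]
        by_cases h : r = p + 1
        · rw [dif_pos h]
          simp only [LinearMap.comp_apply]
          rw [hπequiv, rho_castD]
        · rw [dif_neg h]
          show σ p (-(dv (-(p : ℤ)) (p : ℤ)
              (chainAux B (fun k : ℕ => dv (-(k : ℤ)) (k : ℤ)) σ π r p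
                (ρ (-(r : ℤ)) (r : ℤ) g z))))
            = ρ (-((p : ℤ) + 1)) ((p : ℤ) + 1) g (σ p (-(dv (-(p : ℤ)) (p : ℤ)
              (chainAux B (fun k : ℕ => dv (-(k : ℤ)) (k : ℤ)) σ π r p z))))
          rw [ih, hdvG, ← map_neg, hσequiv]
  · intro r z hz
    have hdiag : chainAux B (fun k : ℕ => dv (-(k : ℤ)) (k : ℤ)) σ π r r z = z :=
      chainAux_diag B _ σ π r z (hπid r z hz)
    -- the inductive invariants
    have step1 : ∀ n : ℕ,
        dv (-(n : ℤ) + 1) (n : ℤ) (dh (-(n : ℤ)) (n : ℤ)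
          (chainAux B (fun k : ℕ => dv (-(k : ℤ)) (k : ℤ)) σ π r n z)) = 0 →
        castLM B (show -((n : ℤ) + 1) + 1 = -(n : ℤ) by ring)
          (dh (-((n : ℤ) + 1)) ((n : ℤ) + 1)
            (chainAux B (fun k : ℕ => dv (-(k : ℤ)) (k : ℤ)) σ π r (n + 1) z))
          = - dv (-(n : ℤ)) (n : ℤ)
              (chainAux B (fun k : ℕ => dv (-(k : ℤ)) (k : ℤ)) σ π r n z) := by
      intro n hT
      rcases lt_trichotomy (n + 1) r with hlt | heq | hgt
      · rw [chainAux_lt B _ σ π r (n + 1) hlt, chainAux_lt B _ σ π r n (by omega)]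
        simp
      · subst heq
        rw [chainAux_lt B _ σ π (n + 1) n (by omega)]
        have hz' : dh (-((n : ℤ) + 1)) ((n : ℤ) + 1)
            (chainAux B (fun k : ℕ => dv (-(k : ℤ)) (k : ℤ)) σ π (n + 1) (n + 1) z) = 0 := by
          rw [hdiag]; exact hz
        rw [hz']
        simp
      · rw [chainAux_succ, dif_neg (by omega)]
        show castLM B (show -((n : ℤ) + 1) + 1 = -(n : ℤ) by ring)
            (dh (-((n : ℤ) + 1)) ((n : ℤ) + 1) (σ n (-(dv (-(n : ℤ)) (n : ℤ)
              (chainAux B (fun k : ℕ => dv (-(k : ℤ)) (k : ℤ)) σ π r n z)))))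
          = -(dv (-(n : ℤ)) (n : ℤ)
              (chainAux B (fun k : ℕ => dv (-(k : ℤ)) (k : ℤ)) σ π r n z))
        refine hσsec n _ ?_
        rw [map_neg, neg_eq_zero]
        have ha := hanti (-(n : ℤ)) (n : ℤ)
          (chainAux B (fun k : ℕ => dv (-(k : ℤ)) (k : ℤ)) σ π r n z)
        exact (eq_neg_of_add_eq_zero_left ha).trans (by rw [hT, neg_zero])
    have step2 : ∀ n : ℕ,
        castLM B (show -((n : ℤ) + 1) + 1 = -(n : ℤ) by ring)
          (dh (-((n : ℤ) + 1)) ((n : ℤ) + 1)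
            (chainAux B (fun k : ℕ => dv (-(k : ℤ)) (k : ℤ)) σ π r (n + 1) z))
          = - dv (-(n : ℤ)) (n : ℤ)
              (chainAux B (fun k : ℕ => dv (-(k : ℤ)) (k : ℤ)) σ π r n z) →
        dv (-((n + 1 : ℕ) : ℤ) + 1) ((n + 1 : ℕ) : ℤ) (dh (-((n + 1 : ℕ) : ℤ)) ((n + 1 : ℕ) : ℤ)
          (chainAux B (fun k : ℕ => dv (-(k : ℤ)) (k : ℤ)) σ π r (n + 1) z)) = 0 := by
      intro n hP
      have hu : dh (-((n : ℤ) + 1)) ((n : ℤ) + 1)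
          (chainAux B (fun k : ℕ => dv (-(k : ℤ)) (k : ℤ)) σ π r (n + 1) z)
          = castLM B (show -(n : ℤ) = -((n : ℤ) + 1) + 1 by ring)
              (- dv (-(n : ℤ)) (n : ℤ)
                (chainAux B (fun k : ℕ => dv (-(k : ℤ)) (k : ℤ)) σ π r n z)) := by
        rw [← hP, castLM_castLM, castLM_self]
      show dv (-((n : ℤ) + 1) + 1) ((n : ℤ) + 1) (dh (-((n : ℤ) + 1)) ((n : ℤ) + 1)
        (chainAux B (fun k : ℕ => dv (-(k : ℤ)) (k : ℤ)) σ π r (n + 1) z)) = 0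
      rw [hu, dv_castLM B dv, map_neg, hdv2, neg_zero, map_zero]
    have key : ∀ n : ℕ,
        dv (-(n : ℤ) + 1) (n : ℤ) (dh (-(n : ℤ)) (n : ℤ)
          (chainAux B (fun k : ℕ => dv (-(k : ℤ)) (k : ℤ)) σ π r n z)) = 0 ∧
        castLM B (show -((n : ℤ) + 1) + 1 = -(n : ℤ) by ring)
          (dh (-((n : ℤ) + 1)) ((n : ℤ) + 1)
            (chainAux B (fun k : ℕ => dv (-(k : ℤ)) (k : ℤ)) σ π r (n + 1) z))
          = - dv (-(n : ℤ)) (n : ℤ)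
              (chainAux B (fun k : ℕ => dv (-(k : ℤ)) (k : ℤ)) σ π r n z) := by
      intro n
      induction n with
      | zero =>
          have T0 : dv (-((0 : ℕ) : ℤ) + 1) ((0 : ℕ) : ℤ) (dh (-((0 : ℕ) : ℤ)) ((0 : ℕ) : ℤ)
              (chainAux B (fun k : ℕ => dv (-(k : ℤ)) (k : ℤ)) σ π r 0 z)) = 0 := by
            rcases Nat.eq_zero_or_pos r with h0 | hpos
            · subst h0
              rw [hdiag, hz, map_zero]
            · rw [chainAux_lt B _ σ π r 0 hpos, LinearMap.zero_apply, map_zero, map_zero]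
          exact ⟨T0, step1 0 T0⟩
      | succ n ih =>
          have t := step2 n ih.2
          exact ⟨t, step1 (n + 1) t⟩
    refine ⟨hdiag, fun p hp => ?_, fun p => ?_⟩
    · show chainAux B (fun k : ℕ => dv (-(k : ℤ)) (k : ℤ)) σ π r p z = 0
      rw [chainAux_lt B _ σ π r p hp]
      rfl
    · show dv (-(p : ℤ)) (p : ℤ)
          (chainAux B (fun k : ℕ => dv (-(k : ℤ)) (k : ℤ)) σ π r p z)
        + castB B (dh (-((p : ℤ) + 1)) ((p : ℤ) + 1)
            (chainAux B (fun k : ℕ => dv (-(k : ℤ)) (k : ℤ)) σ π r (p + 1) z))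
            (show -((p : ℤ) + 1) + 1 = -(p : ℤ) by ring) = 0
      rw [castB_eq_castLM, (key p).2, add_neg_cancel]
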